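/- Let V be a finite-dimensional complex inner product space, m ≥ 2, and ρ : ℝ^m → End(V) a Clifford multiplication. If v_1, ..., v_m ∈ V satisfy Σ_i ρ(e^i)v_i = 0, then for each fixed index j, |v_j|^2 ≤ ((m-1)/m)·Σ_{i=1}^m |v_i|^2. -/
import Mathlib

local notation "⟪" x ", " y "⟫_ℂ" => @inner ℂ _ _ x y


/-- Kato–Yau inequality in algebraic form, with a distinguished index. -/
theorem kato_yau_algebraic_index {m : ℕ} {V : Type*} [NormedAddCommGroup V]
    [InnerProductSpace ℂ V] [FiniteDimensional ℂ V] (hm : 2 ≤ m)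
    (ρ : EuclideanSpace ℝ (Fin m) →ₗ[ℝ] (V →ₗ[ℂ] V))
    (hskew : ∀ α, LinearMap.adjoint (ρ α) = -ρ α)
    (hsq : ∀ α, (ρ α) ∘ₗ (ρ α) = -((‖α‖ : ℂ) ^ 2) • (LinearMap.id : V →ₗ[ℂ] V))
    (v : Fin m → V)
    (hv : ∑ i, ρ (EuclideanSpace.single i (1 : ℝ)) (v i) = 0) (j : Fin m) :
    ‖v j‖ ^ 2 ≤ (((m : ℝ) - 1) / m) * ∑ i, ‖v i‖ ^ 2 := by
  set A : Fin m → (V →ₗ[ℂ] V) := fun i => ρ (EuclideanSpace.single i (1 : ℝ)) with hA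
  have hnorm1 : ∀ i : Fin m, ‖EuclideanSpace.single i (1 : ℝ)‖ = 1 := by
    intro i; simp [EuclideanSpace.norm_single]
  -- ρ α preserves norm when ‖α‖ = 1
  have hiso : ∀ (i : Fin m) (w : V), ‖A i w‖ = ‖w‖ := by
    intro i w
    have h3 : A i (A i w) = -w := by
      have := congrArg (fun f => f w) (hsq (EuclideanSpace.single i (1 : ℝ)))
      simpa [hnorm1 i] using this
    have hsk : LinearMap.adjoint (A i) = -(A i) := hskew _
    have h2 : ⟪LinearMap.adjoint (A i) w, A i w⟫_ℂ = ⟪w, A i (A i w)⟫_ℂ :=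
      LinearMap.adjoint_inner_left _ _ _
    rw [hsk, h3] at h2
    have h1 : ⟪A i w, A i w⟫_ℂ = ⟪w, w⟫_ℂ := by
      simpa using h2
    have h5 : ‖A i w‖ ^ 2 = ‖w‖ ^ 2 := by
      rw [inner_self_eq_norm_sq_to_K, inner_self_eq_norm_sq_to_K] at h1
      exact_mod_cast h1
    rw [← Real.sqrt_sq (norm_nonneg (A i w)), ← Real.sqrt_sq (norm_nonneg w), h5]
  have hAA : ∀ i : Fin m, ∀ w : V, A i (A i w) = -w := by
    intro i w
    have := congrArg (fun f => f w) (hsq (EuclideanSpace.single i (1 : ℝ)))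
    simpa [hnorm1 i] using this
  -- apply A j to the relation
  have hsum : ∑ i, A j (A i (v i)) = 0 := by
    have := congrArg (A j) hv
    simpa [map_sum] using this
  have hvj : v j = ∑ i ∈ Finset.univ.erase j, A j (A i (v i)) := by
    have := Finset.add_sum_erase Finset.univ (fun i => A j (A i (v i))) (Finset.mem_univ j)
    rw [hsum] at this
    have key2 : -(v j) + ∑ i ∈ Finset.univ.erase j, A j (A i (v i)) = 0 := by
      simpa [hAA j (v j)] using this
    exact (neg_add_eq_zero.mp key2).symm |>.symm
  -- norm estimate
  have hle : ‖v j‖ ≤ ∑ i ∈ Finset.univ.erase j, ‖v i‖ := by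
    rw [hvj]
    refine (norm_sum_le _ _).trans_eq ?_
    exact Finset.sum_congr rfl (fun i _ => by rw [hiso, hiso])
  have hcard : (Finset.univ.erase j).card = m - 1 := by
    simp [Finset.card_erase_of_mem]
  have hsq2 : ‖v j‖ ^ 2 ≤ ((m : ℝ) - 1) * ∑ i ∈ Finset.univ.erase j, ‖v i‖ ^ 2 := by
    have h1 : ‖v j‖ ^ 2 ≤ (∑ i ∈ Finset.univ.erase j, ‖v i‖) ^ 2 := by
      apply pow_le_pow_left₀ (norm_nonneg _) hle
    have h2 := sq_sum_le_card_mul_sum_sq (s := Finset.univ.erase j) (f := fun i => ‖v i‖)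
    rw [hcard] at h2
    have hc : ((m - 1 : ℕ) : ℝ) = (m : ℝ) - 1 := by
      have : (1:ℕ) ≤ m := by omega
      push_cast [Nat.cast_sub this]
      ring
    calc ‖v j‖ ^ 2 ≤ _ := h1
      _ ≤ ((m - 1 : ℕ) : ℝ) * ∑ i ∈ Finset.univ.erase j, ‖v i‖ ^ 2 := h2
      _ = _ := by rw [hc]
  have hsplit : ∑ i, ‖v i‖ ^ 2
      = ‖v j‖ ^ 2 + ∑ i ∈ Finset.univ.erase j, ‖v i‖ ^ 2 :=
    (Finset.add_sum_erase Finset.univ (fun i => ‖v i‖ ^ 2) (Finset.mem_univ j)).symm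
  have hm' : (2 : ℝ) ≤ (m : ℝ) := by exact_mod_cast hm
  have hS : (0:ℝ) ≤ ∑ i ∈ Finset.univ.erase j, ‖v i‖ ^ 2 :=
    Finset.sum_nonneg (fun i _ => sq_nonneg _)
  rw [hsplit, div_mul_eq_mul_div, le_div_iff₀ (by linarith)]
  nlinarith [sq_nonneg (‖v j‖)]
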